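/- Let S be a finite nonempty set, p : S → S → ℝ a stochastic matrix with all entries strictly positive, g : S → ℝ, and α ∈ ℝ. Suppose ρ : ℝ → ℝ and V : ℝ → S → ℝ satisfy, for every ζ ≥ 0: ρ(ζ) > 0, V(ζ) strictly positive, and ρ(ζ)·V(ζ)(i) = exp(ζ·g(i))·Σ_j p(i,j)·V(ζ)(j) for all i; suppose ρ and ζ ↦ V(ζ)(i) (for each i) are differentiable on (0, ∞). Let ζ* > 0 be an interior maximizer of ζ ↦ ζ·α − log ρ(ζ) over [0, ∞), and let u : S → ℝ be strictly positive with Σ_i u(i)·exp(ζ*·g(i))·p(i,j) = ρ(ζ*)·u(j) for all j. Then Σ_i π*(i)·g(i) = α, where π*(i) := u(i)·V(ζ*)(i) / Σ_j u(j)·V(ζ*)(j); that is, the stationary expectation of g under the tilted kernel at ζ* equals the conditioning threshold α. -/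

import Mathlib

/-- At an interior maximizer `ζ* > 0` of `ζ ↦ ζ * α - log (ρ ζ)` over
`[0, ∞)`, the stationary expectation of `g` under the tilted kernel equals the
conditioning threshold `α`. -/
theorem stationary_mean_eq_threshold_at_maximizer
    {S : Type*} [Fintype S] [Nonempty S]
    (p : S → S → ℝ)
    (hp_pos : ∀ i j, 0 < p i j)
    (hp_row : ∀ i, ∑ j, p i j = 1)
    (g : S → ℝ) (α : ℝ)
    (ρ : ℝ → ℝ) (V : ℝ → S → ℝ)
    (hρ : ∀ ζ : ℝ, 0 ≤ ζ → 0 < ρ ζ)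
    (hV : ∀ ζ : ℝ, 0 ≤ ζ → ∀ i, 0 < V ζ i)
    (heq : ∀ ζ : ℝ, 0 ≤ ζ → ∀ i,
      ρ ζ * V ζ i = Real.exp (ζ * g i) * ∑ j, p i j * V ζ j)
    (hρdiff : ∀ ζ : ℝ, 0 < ζ → DifferentiableAt ℝ ρ ζ)
    (hVdiff : ∀ ζ : ℝ, 0 < ζ → ∀ i, DifferentiableAt ℝ (fun t => V t i) ζ)
    (ζstar : ℝ) (hζstar : 0 < ζstar)
    (hmax : ∀ ζ : ℝ, 0 ≤ ζ →
      ζ * α - Real.log (ρ ζ) ≤ ζstar * α - Real.log (ρ ζstar))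
    (u : S → ℝ) (hu : ∀ i, 0 < u i)
    (hleft : ∀ j, ∑ i, u i * (Real.exp (ζstar * g i) * p i j) = ρ ζstar * u j) :
    ∑ i, (u i * V ζstar i / ∑ j, u j * V ζstar j) * g i = α := by
  have hmem : Set.Ioi (0:ℝ) ∈ nhds ζstar := Ioi_mem_nhds hζstar
  have hρpos : 0 < ρ ζstar := hρ ζstar hζstar.le
  have hρne : ρ ζstar ≠ 0 := hρpos.ne'
  set ρ' := deriv ρ ζstar with hρ'def
  set V' := fun i => deriv (fun t => V t i) ζstar with hV'def
  -- Step 1: α = ρ' / ρ ζstar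
  have hderivf : HasDerivAt (fun ζ => ζ * α - Real.log (ρ ζ)) (α - ρ' / ρ ζstar) ζstar := by
    have h1 : HasDerivAt (fun ζ : ℝ => ζ * α) α ζstar := by
      simpa using (hasDerivAt_id ζstar).mul_const α
    exact h1.sub (((hρdiff ζstar hζstar).hasDerivAt).log hρne)
  have hlocal : IsLocalMax (fun ζ => ζ * α - Real.log (ρ ζ)) ζstar := by
    filter_upwards [hmem] with ζ hζ using hmax ζ (le_of_lt hζ)
  have halpha : ρ' = α * ρ ζstar := by
    have h0 := hlocal.hasDerivAt_eq_zero hderivf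
    field_simp at h0
    linarith
  -- Step 2: differentiate the eigen equation
  have key : ∀ i, ρ' * V ζstar i + ρ ζstar * V' i
      = g i * (ρ ζstar * V ζstar i) + Real.exp (ζstar * g i) * ∑ j, p i j * V' j := by
    intro i
    have hL : HasDerivAt (fun ζ => ρ ζ * V ζ i)
        (ρ' * V ζstar i + ρ ζstar * V' i) ζstar :=
      ((hρdiff ζstar hζstar).hasDerivAt).mul ((hVdiff ζstar hζstar i).hasDerivAt)
    have hR : HasDerivAt (fun ζ => Real.exp (ζ * g i) * ∑ j, p i j * V ζ j)
        (g i * Real.exp (ζstar * g i) * ∑ j, p i j * V ζstar j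
          + Real.exp (ζstar * g i) * ∑ j, p i j * V' j) ζstar := by
      have he : HasDerivAt (fun ζ : ℝ => Real.exp (ζ * g i))
          (g i * Real.exp (ζstar * g i)) ζstar := by
        have h2 : HasDerivAt (fun ζ : ℝ => ζ * g i) (g i) ζstar := by
          simpa using (hasDerivAt_id ζstar).mul_const (g i)
        simpa [mul_comm] using h2.exp
      have hs : HasDerivAt (fun ζ => ∑ j, p i j * V ζ j) (∑ j, p i j * V' j) ζstar :=
        HasDerivAt.fun_sum fun j _ => ((hVdiff ζstar hζstar j).hasDerivAt).const_mul (p i j)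
      exact he.mul hs
    have hEq : (fun ζ => Real.exp (ζ * g i) * ∑ j, p i j * V ζ j)
        =ᶠ[nhds ζstar] (fun ζ => ρ ζ * V ζ i) := by
      filter_upwards [hmem] with ζ hζ using (heq ζ (le_of_lt hζ) i).symm
    have hL' : HasDerivAt (fun ζ => Real.exp (ζ * g i) * ∑ j, p i j * V ζ j)
        (ρ' * V ζstar i + ρ ζstar * V' i) ζstar := hL.congr_of_eventuallyEq hEq
    have huniq := hL'.unique hR
    rw [huniq, heq ζstar hζstar.le i]
    ring
  -- Step 3: multiply by u and sum
  have hsum : ρ' * ∑ i, u i * V ζstar i = ρ ζstar * ∑ i, u i * g i * V ζstar i := by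
    have h1 : ∑ i, u i * (ρ' * V ζstar i + ρ ζstar * V' i)
        = ∑ i, u i * (g i * (ρ ζstar * V ζstar i)
            + Real.exp (ζstar * g i) * ∑ j, p i j * V' j) :=
      Finset.sum_congr rfl fun i _ => by rw [key i]
    have h2 : ∑ i, u i * (Real.exp (ζstar * g i) * ∑ j, p i j * V' j)
        = ρ ζstar * ∑ j, u j * V' j := by
      calc ∑ i, u i * (Real.exp (ζstar * g i) * ∑ j, p i j * V' j)
          = ∑ i, ∑ j, u i * (Real.exp (ζstar * g i) * p i j) * V' j := by
            simp only [Finset.mul_sum]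
            exact Finset.sum_congr rfl fun i _ =>
              Finset.sum_congr rfl fun j _ => by ring
        _ = ∑ j, (∑ i, u i * (Real.exp (ζstar * g i) * p i j)) * V' j := by
            rw [Finset.sum_comm]
            exact Finset.sum_congr rfl fun j _ => (Finset.sum_mul _ _ _).symm
        _ = ∑ j, ρ ζstar * (u j * V' j) := by
            refine Finset.sum_congr rfl fun j _ => by rw [hleft j]; ring
        _ = ρ ζstar * ∑ j, u j * V' j := (Finset.mul_sum _ _ _).symm
    have hlhs : ∑ i, u i * (ρ' * V ζstar i + ρ ζstar * V' i)
        = ρ' * ∑ i, u i * V ζstar i + ρ ζstar * ∑ i, u i * V' i := by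
      simp only [mul_add, Finset.sum_add_distrib, Finset.mul_sum]
      congr 1
      · exact Finset.sum_congr rfl fun i _ => by ring
      · exact Finset.sum_congr rfl fun i _ => by ring
    have hrhs : ∑ i, u i * (g i * (ρ ζstar * V ζstar i)
            + Real.exp (ζstar * g i) * ∑ j, p i j * V' j)
        = ρ ζstar * ∑ i, u i * g i * V ζstar i + ρ ζstar * ∑ j, u j * V' j := by
      simp only [mul_add, Finset.sum_add_distrib]
      rw [h2]
      congr 1
      rw [Finset.mul_sum]
      exact Finset.sum_congr rfl fun i _ => by ring
    rw [hlhs, hrhs] at h1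
    linarith
  -- Conclusion
  set T := ∑ j, u j * V ζstar j with hT
  have hTpos : 0 < T :=
    Finset.sum_pos (fun j _ => mul_pos (hu j) (hV ζstar hζstar.le j)) Finset.univ_nonempty
  have hfin : ∑ i, u i * g i * V ζstar i = α * T := by
    rw [halpha] at hsum
    have := mul_left_cancel₀ hρne (by linarith : ρ ζstar * (α * T) = ρ ζstar * ∑ i, u i * g i * V ζstar i)
    linarith
  calc ∑ i, (u i * V ζstar i / T) * g i
      = (∑ i, u i * g i * V ζstar i) / T := by
        rw [Finset.sum_div]
        exact Finset.sum_congr rfl fun i _ => by ring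
    _ = α := by rw [hfin]; field_simp
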